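/- Let (g, g₊, g₋) be a finite-dimensional Manin triple over a field k of characteristic 0. Then the Lie bracket of g₊ together with the cobracket δ: g₊ → g₊ ∧ g₊ obtained by dualizing the Lie bracket of g₋ under the pairing induced by the invariant form makes g₊ a Lie bialgebra. -/

import Mathlib

/- STATEMENT 6: Let (g, g₊, g₋) be a finite-dimensional Manin triple over a
field k of characteristic 0.  Then the Lie bracket of g₊, together with the
cobracket δ : g₊ → g₊ ∧ g₊ obtained by dualizing the Lie bracket of g₋ under
the pairing induced by the invariant form, makes g₊ a Lie bialgebra. -/

open TensorProduct

variable (k : Type*) [Field k] [CharZero k]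
variable (L : Type*) [LieRing L] [LieAlgebra k L]

attribute [local instance 100] LieRing.ofAssociativeRing

/-- The Lie bracket of `L` as a linear map `L →ₗ End L`. -/
noncomputable def lieBr : L →ₗ[k] Module.End k L := (LieAlgebra.ad k L).toLinearMap

/-- The Lie bracket as a linear map on the tensor square. -/
noncomputable def liftBr : L ⊗[k] L →ₗ[k] L := TensorProduct.lift (lieBr k L)

/-- `(a⊗b)⊗(c⊗d) ↦ ⁅a,c⁆⊗b⊗d`, i.e. `φ⊗ψ ↦ [φ₁₂, ψ₁₃]` for `φ,ψ ∈ g⊗g ⊆ U(g)⊗U(g)`. -/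
noncomputable def t1 : (L ⊗[k] L) ⊗[k] (L ⊗[k] L) →ₗ[k] L ⊗[k] (L ⊗[k] L) :=
  (TensorProduct.map (liftBr k L) LinearMap.id) ∘ₗ
    (TensorProduct.tensorTensorTensorComm k L L L L).toLinearMap

/-- `(a⊗b)⊗(c⊗d) ↦ a⊗⁅b,c⁆⊗d`, i.e. `φ⊗ψ ↦ [φ₁₂, ψ₂₃]`. -/
noncomputable def t2 : (L ⊗[k] L) ⊗[k] (L ⊗[k] L) →ₗ[k] L ⊗[k] (L ⊗[k] L) :=
  (LinearMap.lTensor L ((LinearMap.rTensor L (liftBr k L)) ∘ₗ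
      (TensorProduct.assoc k L L L).symm.toLinearMap)) ∘ₗ
    (TensorProduct.assoc k L L (L ⊗[k] L)).toLinearMap

/-- `(a⊗b)⊗(c⊗d) ↦ a⊗c⊗⁅b,d⁆`, i.e. `φ⊗ψ ↦ [φ₁₃, ψ₂₃]`. -/
noncomputable def t3 : (L ⊗[k] L) ⊗[k] (L ⊗[k] L) →ₗ[k] L ⊗[k] (L ⊗[k] L) :=
  (LinearMap.lTensor L (LinearMap.lTensor L (liftBr k L))) ∘ₗ
    (TensorProduct.assoc k L L (L ⊗[k] L)).toLinearMap ∘ₗ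
    (TensorProduct.tensorTensorTensorComm k L L L L).toLinearMap

/-- The classical Yang–Baxter equation `[r₁₂,r₁₃]+[r₁₂,r₂₃]+[r₁₃,r₂₃] = 0`
(all terms lie in `g⊗g⊗g ⊆ U(g)^{⊗3}`). -/
def IsCYBE (r : L ⊗[k] L) : Prop :=
  t1 k L (r ⊗ₜ r) + t2 k L (r ⊗ₜ r) + t3 k L (r ⊗ₜ r) = 0

/-- `x ↦ (ad x ⊗ 1 + 1 ⊗ ad x)`, the adjoint action on the tensor square;
`adT x t = [x⊗1 + 1⊗x, t]` in `U(g)⊗U(g)`. -/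
noncomputable def adT : L →ₗ[k] (L ⊗[k] L →ₗ[k] L ⊗[k] L) :=
  ((LinearMap.rTensorHom L).comp (lieBr k L)) + ((LinearMap.lTensorHom L).comp (lieBr k L))

/-- `t ∈ g⊗g` is `g`-invariant: `[x⊗1 + 1⊗x, t] = 0` for all `x`. -/
def LieInvariantElem (t : L ⊗[k] L) : Prop := ∀ x : L, adT k L x t = 0

/-- The flip `r^op` of `r`. -/
noncomputable def rop (r : L ⊗[k] L) : L ⊗[k] L := (TensorProduct.comm k L L) r

/-- The coboundary cobracket `δ(x) = [r, x⊗1 + 1⊗x] = -(ad x ⊗ 1 + 1 ⊗ ad x)(r)`. -/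
noncomputable def cob (r : L ⊗[k] L) : L →ₗ[k] L ⊗[k] L :=
  -((LinearMap.applyₗ r) ∘ₗ (adT k L))

/-- The cyclic permutation `a⊗(b⊗c) ↦ b⊗(c⊗a)` on the triple tensor product. -/
noncomputable def cyc : L ⊗[k] (L ⊗[k] L) →ₗ[k] L ⊗[k] (L ⊗[k] L) :=
  (TensorProduct.assoc k L L L).toLinearMap ∘ₗ (TensorProduct.comm k L (L ⊗[k] L)).toLinearMap

/-- `δ` is co-skew-symmetric, i.e. takes values in `Λ²g ⊆ g⊗g`. -/
def IsCoSkew (D : L →ₗ[k] L ⊗[k] L) : Prop :=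
  ∀ x : L, (TensorProduct.comm k L L) (D x) = - D x

/-- The 1-cocycle condition
`δ([x,y]) = [δ(x), y⊗1+1⊗y] + [x⊗1+1⊗x, δ(y)]`. -/
def IsCocycle (D : L →ₗ[k] L ⊗[k] L) : Prop :=
  ∀ x y : L, D ⁅x, y⁆ = adT k L x (D y) - adT k L y (D x)

/-- The co-Jacobi identity: the cyclic sum of `(1⊗δ)∘δ` vanishes;
equivalently `δ*` is a Lie bracket on `g*`. -/
def IsCoJacobi (D : L →ₗ[k] L ⊗[k] L) : Prop :=
  ∀ x : L,
    (LinearMap.lTensor L D) (D x) + cyc k L ((LinearMap.lTensor L D) (D x)) +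
      cyc k L (cyc k L ((LinearMap.lTensor L D) (D x))) = 0

/-- `D` is a Lie bialgebra cobracket on `L`. -/
def IsLieCobracket (D : L →ₗ[k] L ⊗[k] L) : Prop :=
  IsCoSkew k L D ∧ IsCocycle k L D ∧ IsCoJacobi k L D


section Aux
variable (k : Type*) [Field k]
variable (L : Type*) [LieRing L] [LieAlgebra k L]

/-- auxiliary ext lemma for triple tensors `M ⊗ (N₁ ⊗ N₂)`. -/
theorem myExt3 {M N₁ N₂ Q : Type*} [AddCommGroup M] [Module k M]
    [AddCommGroup N₁] [Module k N₁] [AddCommGroup N₂] [Module k N₂]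
    [AddCommGroup Q] [Module k Q]
    {f g : M ⊗[k] (N₁ ⊗[k] N₂) →ₗ[k] Q}
    (h : ∀ (m : M) (n₁ : N₁) (n₂ : N₂), f (m ⊗ₜ (n₁ ⊗ₜ n₂)) = g (m ⊗ₜ (n₁ ⊗ₜ n₂))) :
    f = g := by
  apply TensorProduct.ext'
  intro m n
  induction n using TensorProduct.induction_on with
  | zero => simp
  | tmul a c => exact h m a c
  | add p q hp hq => rw [tmul_add, map_add, map_add, hp, hq]

noncomputable def pfAux (gp : LieSubalgebra k L) (B : L →ₗ[k] L →ₗ[k] k) (ξ : L) :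
    ↥gp →ₗ[k] k := (B.flip ξ) ∘ₗ gp.incl.toLinearMap

@[simp] theorem pfAux_apply (gp : LieSubalgebra k L) (B : L →ₗ[k] L →ₗ[k] k) (ξ : L)
    (x : ↥gp) : pfAux k L gp B ξ x = B (x : L) ξ := rfl

noncomputable def pair2Aux (gp : LieSubalgebra k L) (B : L →ₗ[k] L →ₗ[k] k) (ξ η : L) :
    ↥gp ⊗[k] ↥gp →ₗ[k] k :=
  (TensorProduct.lid k k).toLinearMap ∘ₗ
    TensorProduct.map (pfAux k L gp B ξ) (pfAux k L gp B η)

@[simp] theorem pair2Aux_tmul (gp : LieSubalgebra k L) (B : L →ₗ[k] L →ₗ[k] k) (ξ η : L)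
    (a c : ↥gp) : pair2Aux k L gp B ξ η (a ⊗ₜ c) = B (a : L) ξ * B (c : L) η := by
  simp [pair2Aux, smul_eq_mul]

noncomputable def pair3Aux (gp : LieSubalgebra k L) (B : L →ₗ[k] L →ₗ[k] k) (ξ η ζ : L) :
    ↥gp ⊗[k] (↥gp ⊗[k] ↥gp) →ₗ[k] k :=
  (TensorProduct.lid k k).toLinearMap ∘ₗ
    TensorProduct.map (pfAux k L gp B ξ) (pair2Aux k L gp B η ζ)

theorem pair3Aux_apply (gp : LieSubalgebra k L) (B : L →ₗ[k] L →ₗ[k] k) (ξ η ζ : L)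
    (a : ↥gp) (t : ↥gp ⊗[k] ↥gp) :
    pair3Aux k L gp B ξ η ζ (a ⊗ₜ t) = B (a : L) ξ * pair2Aux k L gp B η ζ t := by
  simp [pair3Aux, smul_eq_mul]

@[simp] theorem pair3Aux_tmul (gp : LieSubalgebra k L) (B : L →ₗ[k] L →ₗ[k] k) (ξ η ζ : L)
    (a c d : ↥gp) :
    pair3Aux k L gp B ξ η ζ (a ⊗ₜ (c ⊗ₜ d)) =
      B (a : L) ξ * (B (c : L) η * B (d : L) ζ) := by
  rw [pair3Aux_apply, pair2Aux_tmul]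

theorem adT_tmul (x a c : L) :
    adT k L x (a ⊗ₜ[k] c) = ⁅x, a⁆ ⊗ₜ[k] c + a ⊗ₜ[k] ⁅x, c⁆ := by
  simp [adT, lieBr, LieAlgebra.ad_apply]

theorem cyc_tmul (a c d : L) :
    cyc k L (a ⊗ₜ[k] (c ⊗ₜ[k] d)) = c ⊗ₜ[k] (d ⊗ₜ[k] a) := by
  simp [cyc]

theorem myLieSum {ι : Type*} (s : Finset ι) (x : L) (f : ι → L) :
    ⁅x, ∑ i ∈ s, f i⁆ = ∑ i ∈ s, ⁅x, f i⁆ := by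
  classical
  induction s using Finset.cons_induction with
  | empty => simp
  | cons a s ha ih => rw [Finset.sum_cons, Finset.sum_cons, lie_add, ih]

theorem mySumLie {ι : Type*} (s : Finset ι) (y : L) (f : ι → L) :
    ⁅∑ i ∈ s, f i, y⁆ = ∑ i ∈ s, ⁅f i, y⁆ := by
  classical
  induction s using Finset.cons_induction with
  | empty => simp
  | cons a s ha ih => rw [Finset.sum_cons, Finset.sum_cons, add_lie, ih]

end Aux

set_option maxHeartbeats 4000000 in
theorem stmt6 [FiniteDimensional k L]
    (gp gm : LieSubalgebra k L)
    (B : L →ₗ[k] L →ₗ[k] k)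
    (hsymm : ∀ x y : L, B x y = B y x)
    (hnondeg : ∀ x : L, (∀ y : L, B x y = 0) → x = 0)
    (hinv : ∀ x y z : L, B ⁅x, y⁆ z + B y ⁅x, z⁆ = 0)
    (hcompl : IsCompl gp.toSubmodule gm.toSubmodule)
    (hisop : ∀ x ∈ gp, ∀ y ∈ gp, B x y = 0)
    (hisom : ∀ x ∈ gm, ∀ y ∈ gm, B x y = 0) :
    ∃ δ : ↥gp →ₗ[k] ↥gp ⊗[k] ↥gp,
      -- δ is dual to the bracket of g₋ under the pairing induced by B :
      (∀ (x : ↥gp) (ξ η : ↥gm),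
        ((TensorProduct.lid k k).toLinearMap ∘ₗ
          (TensorProduct.map ((B.flip (ξ : L)) ∘ₗ gp.incl.toLinearMap)
            ((B.flip (η : L)) ∘ₗ gp.incl.toLinearMap))) (δ x) =
          B (x : L) ((⁅ξ, η⁆ : ↥gm) : L)) ∧
      -- and (g₊, [·,·], δ) is a Lie bialgebra :
      IsLieCobracket k (↥gp) δ := by
  classical
  -- projections onto gp and gm
  set pp : L →ₗ[k] ↥gp.toSubmodule :=
    gp.toSubmodule.projectionOnto gm.toSubmodule hcompl with hpp
  set pm : L →ₗ[k] ↥gm.toSubmodule :=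
    gm.toSubmodule.projectionOnto gp.toSubmodule hcompl.symm with hpm
  have hdecomp : ∀ y : L, ((pp y : L) + (pm y : L)) = y := fun y =>
    Submodule.projection_add_projection_eq_self hcompl y
  have hppmem : ∀ y : L, ((pp y : L)) ∈ gp := fun y => (pp y).2
  have hpmmem : ∀ y : L, ((pm y : L)) ∈ gm := fun y => (pm y).2
  -- nondegeneracy of the pairing between gp and gm
  have ndP : ∀ x : ↥gp, (∀ ξ : ↥gm, B (x : L) (ξ : L) = 0) → x = 0 := by
    intro x hx
    refine Subtype.ext (hnondeg _ fun y => ?_)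
    conv_lhs => rw [← hdecomp y]
    rw [map_add, hisop _ x.2 _ (hppmem y), hx ⟨(pm y : L), hpmmem y⟩, add_zero]
  have ndM : ∀ ξ : ↥gm, (∀ x : ↥gp, B (x : L) (ξ : L) = 0) → ξ = 0 := by
    intro ξ hξ
    refine Subtype.ext (hnondeg _ fun y => ?_)
    conv_lhs => rw [← hdecomp y]
    rw [map_add, hsymm (↑ξ) (pp y : L), hsymm (↑ξ) (pm y : L)]
    rw [hξ ⟨(pp y : L), hppmem y⟩, hisom _ (hpmmem y) _ ξ.2, add_zero]
  -- the bilinear pairing as a linear map gp →ₗ Dual gm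
  set F : ↥gp →ₗ[k] Module.Dual k ↥gm :=
    B.compl₁₂ gp.toSubmodule.subtype gm.toSubmodule.subtype with hF
  have hFapp : ∀ (x : ↥gp) (ξ : ↥gm), F x ξ = B (x : L) (ξ : L) := fun x ξ => rfl
  have hFinj : Function.Injective F := by
    rw [injective_iff_map_eq_zero]
    intro x hx
    exact ndP x fun ξ => by rw [← hFapp, hx]; rfl
  have hGinj : Function.Injective F.flip := by
    rw [injective_iff_map_eq_zero]
    intro ξ hξ
    exact ndM ξ fun x => by rw [← hFapp]; simpa using LinearMap.congr_fun hξ x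
  have hrank : Module.finrank k ↥gp = Module.finrank k (Module.Dual k ↥gm) := by
    rw [Subspace.dual_finrank_eq]
    refine le_antisymm ?_ ?_
    · have := LinearMap.finrank_le_finrank_of_injective hFinj
      simpa [Subspace.dual_finrank_eq] using this
    · have := LinearMap.finrank_le_finrank_of_injective hGinj
      simpa [Subspace.dual_finrank_eq] using this
  have hFbij : Function.Bijective F :=
    ⟨hFinj, (LinearMap.injective_iff_surjective_of_finrank_eq_finrank hrank).mp hFinj⟩
  set eF : ↥gp ≃ₗ[k] Module.Dual k ↥gm := LinearEquiv.ofBijective F hFbij with heF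
  -- dual bases
  set g : Module.Basis (Fin (Module.finrank k ↥gm)) k ↥gm := Module.finBasis k ↥gm with hg
  set b : Module.Basis (Fin (Module.finrank k ↥gm)) k ↥gp := g.dualBasis.map eF.symm with hb
  have hbg : ∀ i j, B (b i : L) (g j : L) = if j = i then 1 else 0 := by
    intro i j
    rw [← hFapp]
    have : F (b i) = g.dualBasis i := by
      show F (eF.symm (g.dualBasis i)) = g.dualBasis i
      exact eF.apply_symm_apply _
    rw [this, g.dualBasis_apply_self]
  -- expansions in dual bases
  have expP : ∀ x : ↥gp, ∑ i, B (x : L) (g i : L) • b i = x := by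
    intro x
    apply hFinj
    refine g.ext fun j => ?_
    have h1 : F (∑ i, B (x : L) (g i : L) • b i) (g j)
        = ∑ i, B (x : L) (g i : L) * (if j = i then 1 else 0) := by
      rw [map_sum, LinearMap.sum_apply]
      refine Finset.sum_congr rfl fun i _ => ?_
      rw [map_smul, LinearMap.smul_apply, hFapp, hbg, smul_eq_mul]
    rw [h1, hFapp]
    simp [mul_ite, mul_one, mul_zero, Finset.sum_ite_eq]
  have expM : ∀ ξ : ↥gm, ∑ i, B (b i : L) (ξ : L) • g i = ξ := by
    intro ξ
    apply hGinj
    refine b.ext fun j => ?_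
    have h1 : F.flip (∑ i, B (b i : L) (ξ : L) • g i) (b j)
        = ∑ i, B (b i : L) (ξ : L) * (if i = j then 1 else 0) := by
      rw [map_sum, LinearMap.sum_apply]
      refine Finset.sum_congr rfl fun i _ => ?_
      rw [map_smul, LinearMap.smul_apply]
      show B (b i : L) (ξ : L) • F (b j) (g i) = _
      rw [hFapp, hbg j i, smul_eq_mul]
    rw [h1]
    show _ = F (b j) ξ
    rw [hFapp]
    simp [mul_ite, mul_one, mul_zero, Finset.sum_ite_eq']
  -- the cobracket
  set d : ↥gp →ₗ[k] ↥gp ⊗[k] ↥gp :=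
    ∑ i, ∑ j, (pfAux k L gp B ((⁅g i, g j⁆ : ↥gm) : L)).smulRight (b i ⊗ₜ[k] b j) with hd
  have hdapp : ∀ x : ↥gp, d x
      = ∑ i, ∑ j, B (x : L) ((⁅g i, g j⁆ : ↥gm) : L) • (b i ⊗ₜ[k] b j) := by
    intro x
    simp [hd, LinearMap.sum_apply, LinearMap.smulRight_apply]
  -- duality with the bracket of gm
  have hdual : ∀ (x : ↥gp) (ξ η : ↥gm),
      pair2Aux k L gp B (ξ : L) (η : L) (d x) = B (x : L) ((⁅ξ, η⁆ : ↥gm) : L) := by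
    intro x ξ η
    rw [hdapp]
    simp only [map_sum, map_smul, pair2Aux_tmul, smul_eq_mul]
    have hexp : ((⁅ξ, η⁆ : ↥gm) : L)
        = ∑ i, ∑ j, (B (b i : L) (ξ : L) * B (b j : L) (η : L)) • ⁅(g i : L), (g j : L)⁆ := by
      conv_lhs => rw [← expM ξ, ← expM η]
      rw [LieSubalgebra.coe_bracket, AddSubmonoidClass.coe_finset_sum,
        AddSubmonoidClass.coe_finset_sum, mySumLie]
      refine Finset.sum_congr rfl fun i _ => ?_
      rw [myLieSum L]
      refine Finset.sum_congr rfl fun j _ => ?_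
      rw [Submodule.coe_smul_of_tower, Submodule.coe_smul_of_tower, smul_lie, lie_smul,
        smul_smul]
    rw [hexp]
    simp only [map_sum, map_smul, smul_eq_mul]
    refine Finset.sum_congr rfl fun i _ => Finset.sum_congr rfl fun j _ => ?_
    rw [LieSubalgebra.coe_bracket]
    ring
  -- expansion of 2-tensors and injectivity of the pairing
  have exp2 : ∀ t : ↥gp ⊗[k] ↥gp,
      ∑ i, ∑ j, pair2Aux k L gp B ((g i : L)) ((g j : L)) t • (b i ⊗ₜ[k] b j) = t := by
    have hS : (∑ i, ∑ j, (pair2Aux k L gp B ((g i : L)) ((g j : L))).smulRight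
        (b i ⊗ₜ[k] b j) : ↥gp ⊗[k] ↥gp →ₗ[k] ↥gp ⊗[k] ↥gp) = LinearMap.id := by
      apply TensorProduct.ext'
      intro a c
      simp only [LinearMap.sum_apply, LinearMap.smulRight_apply, pair2Aux_tmul,
        LinearMap.id_apply]
      conv_rhs => rw [← expP a, ← expP c]
      rw [sum_tmul]
      refine Finset.sum_congr rfl fun i _ => ?_
      rw [tmul_sum]
      refine Finset.sum_congr rfl fun j _ => ?_
      rw [TensorProduct.smul_tmul_smul]
    intro t
    have := LinearMap.congr_fun hS t
    simpa only [LinearMap.sum_apply, LinearMap.smulRight_apply, LinearMap.id_apply] using this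
  have inj2 : ∀ t : ↥gp ⊗[k] ↥gp,
      (∀ ξ η : ↥gm, pair2Aux k L gp B (ξ : L) (η : L) t = 0) → t = 0 := by
    intro t h
    rw [← exp2 t]
    refine Finset.sum_eq_zero fun i _ => Finset.sum_eq_zero fun j _ => ?_
    rw [h (g i) (g j), zero_smul]
  -- expansion of 3-tensors and injectivity
  have exp3 : ∀ t : ↥gp ⊗[k] (↥gp ⊗[k] ↥gp),
      ∑ i, ∑ j, ∑ l, pair3Aux k L gp B ((g i : L)) ((g j : L)) ((g l : L)) t •
        (b i ⊗ₜ[k] (b j ⊗ₜ[k] b l)) = t := by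
    have hS : (∑ i, ∑ j, ∑ l, (pair3Aux k L gp B ((g i : L)) ((g j : L)) ((g l : L))).smulRight
        (b i ⊗ₜ[k] (b j ⊗ₜ[k] b l)) : ↥gp ⊗[k] (↥gp ⊗[k] ↥gp) →ₗ[k] ↥gp ⊗[k] (↥gp ⊗[k] ↥gp))
        = LinearMap.id := by
      apply myExt3 k
      intro a c e
      simp only [LinearMap.sum_apply, LinearMap.smulRight_apply, pair3Aux_tmul,
        LinearMap.id_apply]
      conv_rhs => rw [← expP a, ← expP c, ← expP e]
      rw [sum_tmul]
      refine Finset.sum_congr rfl fun i _ => ?_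
      rw [sum_tmul, tmul_sum]
      refine Finset.sum_congr rfl fun j _ => ?_
      rw [tmul_sum, tmul_sum]
      refine Finset.sum_congr rfl fun l _ => ?_
      rw [TensorProduct.smul_tmul_smul, TensorProduct.smul_tmul_smul]
    intro t
    have := LinearMap.congr_fun hS t
    simpa only [LinearMap.sum_apply, LinearMap.smulRight_apply, LinearMap.id_apply] using this
  have inj3 : ∀ t : ↥gp ⊗[k] (↥gp ⊗[k] ↥gp),
      (∀ ξ η ζ : ↥gm, pair3Aux k L gp B (ξ : L) (η : L) (ζ : L) t = 0) → t = 0 := by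
    intro t h
    rw [← exp3 t]
    refine Finset.sum_eq_zero fun i _ => Finset.sum_eq_zero fun j _ =>
      Finset.sum_eq_zero fun l _ => ?_
    rw [h (g i) (g j) (g l), zero_smul]
  -- co-skew-symmetry
  have hcomm2 : ∀ (ξ η : ↥gm) (t : ↥gp ⊗[k] ↥gp),
      pair2Aux k L gp B (ξ : L) (η : L) ((TensorProduct.comm k ↥gp ↥gp) t)
        = pair2Aux k L gp B (η : L) (ξ : L) t := by
    intro ξ η t
    have h : pair2Aux k L gp B (ξ : L) (η : L) ∘ₗ (TensorProduct.comm k ↥gp ↥gp).toLinearMap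
        = pair2Aux k L gp B (η : L) (ξ : L) := by
      apply TensorProduct.ext'
      intro a c
      simp [mul_comm]
    exact LinearMap.congr_fun h t
  have hskew : IsCoSkew k ↥gp d := by
    intro x
    have h0 : ∀ ξ η : ↥gm,
        pair2Aux k L gp B (ξ : L) (η : L) ((TensorProduct.comm k ↥gp ↥gp) (d x) + d x) = 0 := by
      intro ξ η
      rw [map_add, hcomm2, hdual x η ξ, hdual x ξ η, LieSubalgebra.coe_bracket,
        LieSubalgebra.coe_bracket]
      have hsk : ⁅(η : L), (ξ : L)⁆ = -⁅(ξ : L), (η : L)⁆ := by rw [← lie_skew]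
      rw [hsk, map_neg, neg_add_cancel]
    exact eq_neg_of_add_eq_zero_left (inj2 _ h0)
  -- casting gm.toSubmodule elements to ↥gm
  let mcast : ↥gm.toSubmodule → ↥gm := fun v => ⟨(v : L), v.2⟩
  have hmc : ∀ v : ↥gm.toSubmodule, ((mcast v : ↥gm) : L) = (v : L) := fun v => rfl
  -- pairing with gp elements only sees the gm component
  have hBpm : ∀ (a : ↥gp) (y : L), B (a : L) y = B (a : L) (pm y : L) := by
    intro a y
    conv_lhs => rw [← hdecomp y]
    rw [map_add, hisop _ a.2 _ (hppmem y), zero_add]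
  -- invariance in a convenient form
  have hswap : ∀ u z w : L, B ⁅u, z⁆ w = -B z ⁅u, w⁆ := by
    intro u z w
    have h := hinv u z w
    linear_combination h
  have key4 : ∀ (x : ↥gp) (ξ : ↥gm) (z : L),
      B ⁅(x : L), (ξ : L)⁆ z = B (x : L) ⁅(ξ : L), z⁆ := by
    intro x ξ z
    have h1 : ⁅(x : L), (ξ : L)⁆ = -⁅(ξ : L), (x : L)⁆ := by rw [← lie_skew]
    rw [h1, map_neg, LinearMap.neg_apply, hswap (ξ : L) (x : L) z, neg_neg]
  have keyA : ∀ (x y : ↥gp) (ξ η : ↥gm),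
      B (y : L) ⁅(pp ⁅(x : L), (ξ : L)⁆ : L), (η : L)⁆
        = -B (x : L) ⁅(ξ : L), (pm ⁅(y : L), (η : L)⁆ : L)⁆ := by
    intro x y ξ η
    set a : L := (pp ⁅(x : L), (ξ : L)⁆ : L) with ha
    have s1 : B (y : L) ⁅a, (η : L)⁆ = -B a ⁅(y : L), (η : L)⁆ := by
      have t1 := hswap a (y : L) (η : L)
      have t2 := hswap (y : L) a (η : L)
      have t3 : ⁅a, (y : L)⁆ = -⁅(y : L), a⁆ := by rw [← lie_skew]
      rw [t3, map_neg, LinearMap.neg_apply] at t1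
      linear_combination t1 + t2
    have s2 : B a ⁅(y : L), (η : L)⁆ = B a (pm ⁅(y : L), (η : L)⁆ : L) :=
      hBpm ⟨a, hppmem _⟩ _
    have s3 : B a (pm ⁅(y : L), (η : L)⁆ : L)
        = B ⁅(x : L), (ξ : L)⁆ (pm ⁅(y : L), (η : L)⁆ : L) := by
      have h1 : B ⁅(x : L), (ξ : L)⁆ (pm ⁅(y : L), (η : L)⁆ : L)
          = B a (pm ⁅(y : L), (η : L)⁆ : L)
            + B (pm ⁅(x : L), (ξ : L)⁆ : L) (pm ⁅(y : L), (η : L)⁆ : L) := by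
        conv_lhs => rw [← hdecomp ⁅(x : L), (ξ : L)⁆]
        rw [map_add, LinearMap.add_apply]
      rw [h1, hisom _ (hpmmem _) _ (hpmmem _), add_zero]
    rw [s1, s2, s3, key4]
  -- the main scalar identity behind the cocycle condition
  have hscalar : ∀ (x y : ↥gp) (ξ η : ↥gm),
      B ⁅(x : L), (y : L)⁆ ⁅(ξ : L), (η : L)⁆
        = -B (y : L) ⁅(pm ⁅(x : L), (ξ : L)⁆ : L), (η : L)⁆
          - B (y : L) ⁅(ξ : L), (pm ⁅(x : L), (η : L)⁆ : L)⁆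
          + B (x : L) ⁅(pm ⁅(y : L), (ξ : L)⁆ : L), (η : L)⁆
          + B (x : L) ⁅(ξ : L), (pm ⁅(y : L), (η : L)⁆ : L)⁆ := by
    intro x y ξ η
    have E1 : B ⁅(x : L), (y : L)⁆ ⁅(ξ : L), (η : L)⁆
        = -B (y : L) ⁅(x : L), ⁅(ξ : L), (η : L)⁆⁆ := hswap _ _ _
    have E2 : ⁅(x : L), ⁅(ξ : L), (η : L)⁆⁆
        = ⁅(pp ⁅(x : L), (ξ : L)⁆ : L), (η : L)⁆ + ⁅(pm ⁅(x : L), (ξ : L)⁆ : L), (η : L)⁆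
          + (⁅(ξ : L), (pp ⁅(x : L), (η : L)⁆ : L)⁆
            + ⁅(ξ : L), (pm ⁅(x : L), (η : L)⁆ : L)⁆) := by
      rw [leibniz_lie]
      conv_lhs => rw [← hdecomp ⁅(x : L), (ξ : L)⁆, ← hdecomp ⁅(x : L), (η : L)⁆]
      rw [add_lie, lie_add]
    have E2' : B (y : L) ⁅(x : L), ⁅(ξ : L), (η : L)⁆⁆
        = B (y : L) ⁅(pp ⁅(x : L), (ξ : L)⁆ : L), (η : L)⁆
          + B (y : L) ⁅(pm ⁅(x : L), (ξ : L)⁆ : L), (η : L)⁆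
          + (B (y : L) ⁅(ξ : L), (pp ⁅(x : L), (η : L)⁆ : L)⁆
            + B (y : L) ⁅(ξ : L), (pm ⁅(x : L), (η : L)⁆ : L)⁆) := by
      rw [E2, map_add, map_add, map_add]
    have E3 := keyA x y ξ η
    have E4 : B (y : L) ⁅(ξ : L), (pp ⁅(x : L), (η : L)⁆ : L)⁆
        = B (x : L) ⁅(η : L), (pm ⁅(y : L), (ξ : L)⁆ : L)⁆ := by
      have h := keyA x y η ξ
      have hsk : ⁅(ξ : L), (pp ⁅(x : L), (η : L)⁆ : L)⁆
          = -⁅(pp ⁅(x : L), (η : L)⁆ : L), (ξ : L)⁆ := by rw [← lie_skew]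
      rw [hsk, map_neg, h, neg_neg]
    have E5 : B (x : L) ⁅(η : L), (pm ⁅(y : L), (ξ : L)⁆ : L)⁆
        = -B (x : L) ⁅(pm ⁅(y : L), (ξ : L)⁆ : L), (η : L)⁆ := by
      have hsk : ⁅(η : L), (pm ⁅(y : L), (ξ : L)⁆ : L)⁆
          = -⁅(pm ⁅(y : L), (ξ : L)⁆ : L), (η : L)⁆ := by rw [← lie_skew]
      rw [hsk, map_neg]
    linear_combination E1 - E2' - E3 - E4 - E5
  -- pairing against the adjoint action
  have adT_pair : ∀ (x : ↥gp) (ξ η : ↥gm) (t : ↥gp ⊗[k] ↥gp),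
      pair2Aux k L gp B (ξ : L) (η : L) (adT k ↥gp x t)
        = -pair2Aux k L gp B ((mcast (pm ⁅(x : L), (ξ : L)⁆) : ↥gm) : L) ((η : L)) t
          - pair2Aux k L gp B ((ξ : L)) ((mcast (pm ⁅(x : L), (η : L)⁆) : ↥gm) : L) t := by
    intro x ξ η t
    have h : pair2Aux k L gp B (ξ : L) (η : L) ∘ₗ adT k ↥gp x
        = -pair2Aux k L gp B ((mcast (pm ⁅(x : L), (ξ : L)⁆) : ↥gm) : L) ((η : L))
          - pair2Aux k L gp B ((ξ : L)) ((mcast (pm ⁅(x : L), (η : L)⁆) : ↥gm) : L) := by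
      apply TensorProduct.ext'
      intro a c
      rw [LinearMap.comp_apply, adT_tmul, map_add, pair2Aux_tmul, pair2Aux_tmul,
        LinearMap.sub_apply, LinearMap.neg_apply, pair2Aux_tmul, pair2Aux_tmul,
        LieSubalgebra.coe_bracket, LieSubalgebra.coe_bracket, hmc, hmc,
        hswap (x : L) (a : L) (ξ : L), hswap (x : L) (c : L) (η : L),
        hBpm a ⁅(x : L), (ξ : L)⁆, hBpm c ⁅(x : L), (η : L)⁆]
      ring
    exact LinearMap.congr_fun h t
  -- the cocycle condition
  have hcoc : IsCocycle k ↥gp d := by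
    intro x y
    have h0 : ∀ ξ η : ↥gm, pair2Aux k L gp B (ξ : L) (η : L)
        (d ⁅x, y⁆ - (adT k ↥gp x (d y) - adT k ↥gp y (d x))) = 0 := by
      intro ξ η
      rw [map_sub, map_sub, hdual ⁅x, y⁆ ξ η, adT_pair x ξ η (d y), adT_pair y ξ η (d x),
        hdual y (mcast (pm ⁅(x : L), (ξ : L)⁆)) η, hdual y ξ (mcast (pm ⁅(x : L), (η : L)⁆)),
        hdual x (mcast (pm ⁅(y : L), (ξ : L)⁆)) η, hdual x ξ (mcast (pm ⁅(y : L), (η : L)⁆))]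
      simp only [LieSubalgebra.coe_bracket, hmc]
      linear_combination hscalar x y ξ η
    have h1 := inj2 _ h0
    rw [sub_eq_zero] at h1
    exact h1
  -- pairing formulas for (1 ⊗ d) ∘ d and for the cyclic permutation
  have hlT : ∀ (ξ η ζ : ↥gm) (t : ↥gp ⊗[k] ↥gp),
      pair3Aux k L gp B (ξ : L) (η : L) (ζ : L) (LinearMap.lTensor ↥gp d t)
        = pair2Aux k L gp B (ξ : L) ((⁅η, ζ⁆ : ↥gm) : L) t := by
    intro ξ η ζ t
    have h : pair3Aux k L gp B (ξ : L) (η : L) (ζ : L) ∘ₗ LinearMap.lTensor ↥gp d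
        = pair2Aux k L gp B (ξ : L) ((⁅η, ζ⁆ : ↥gm) : L) := by
      apply TensorProduct.ext'
      intro a c
      rw [LinearMap.comp_apply, LinearMap.lTensor_tmul, pair3Aux_apply, hdual c η ζ,
        pair2Aux_tmul]
    exact LinearMap.congr_fun h t
  have hcyc3 : ∀ (ξ η ζ : ↥gm) (t : ↥gp ⊗[k] (↥gp ⊗[k] ↥gp)),
      pair3Aux k L gp B (ξ : L) (η : L) (ζ : L) (cyc k ↥gp t)
        = pair3Aux k L gp B (ζ : L) (ξ : L) (η : L) t := by
    intro ξ η ζ t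
    have h : pair3Aux k L gp B (ξ : L) (η : L) (ζ : L) ∘ₗ cyc k ↥gp
        = pair3Aux k L gp B (ζ : L) (ξ : L) (η : L) := by
      apply myExt3 k
      intro a c e
      rw [LinearMap.comp_apply, cyc_tmul, pair3Aux_tmul, pair3Aux_tmul]
      ring
    exact LinearMap.congr_fun h t
  -- co-Jacobi
  have hcoj : IsCoJacobi k ↥gp d := by
    intro x
    apply inj3
    intro ξ η ζ
    rw [map_add, map_add, hcyc3, hcyc3, hcyc3, hlT, hlT, hlT, hdual x ξ ⁅η, ζ⁆,
      hdual x ζ ⁅ξ, η⁆, hdual x η ⁅ζ, ξ⁆]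
    have hj : (⁅ξ, ⁅η, ζ⁆⁆ + ⁅ζ, ⁅ξ, η⁆⁆ + ⁅η, ⁅ζ, ξ⁆⁆ : ↥gm) = 0 := by
      have hJ := lie_jacobi ξ η ζ
      rw [← hJ]
      abel
    have h2 : ((⁅ξ, ⁅η, ζ⁆⁆ + ⁅ζ, ⁅ξ, η⁆⁆ + ⁅η, ⁅ζ, ξ⁆⁆ : ↥gm) : L)
        = ((⁅ξ, ⁅η, ζ⁆⁆ : ↥gm) : L) + ((⁅ζ, ⁅ξ, η⁆⁆ : ↥gm) : L) + ((⁅η, ⁅ζ, ξ⁆⁆ : ↥gm) : L) := by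
      norm_cast
    have h3 : B (x : L) ((⁅ξ, ⁅η, ζ⁆⁆ + ⁅ζ, ⁅ξ, η⁆⁆ + ⁅η, ⁅ζ, ξ⁆⁆ : ↥gm) : L) = 0 := by
      rw [hj]
      simp
    rw [h2, map_add, map_add] at h3
    linear_combination h3
  exact ⟨d, fun x ξ η => hdual x ξ η, hskew, hcoc, hcoj⟩
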